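/- For integers 0 ≤ l ≤ n, the maximum over 0 ≤ y ≤ l of C(n−y, l−y) · C(n+y−l, y) equals C(n−⌊l/2⌋, ⌈l/2⌉) · C(n−⌈l/2⌉, ⌊l/2⌋), i.e., the maximizing y is ⌊l/2⌋. -/
import Mathlib

private lemma step11 (k a c : ℕ) (h : c ≤ a) :
    Nat.choose (a + 1) k * Nat.choose c k ≤ Nat.choose a k * Nat.choose (c + 1) k := by
  rcases Nat.lt_or_ge c k with hk | hk
  · simp [Nat.choose_eq_zero_of_lt hk]
  have hk2 : k ≤ a := le_trans hk h
  have hpos : 0 < (a + 1 - k) * (c + 1) := by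
    have : 0 < a + 1 - k := by omega
    positivity
  refine Nat.le_of_mul_le_mul_right ?_ hpos
  have h1 : Nat.choose a k * (a + 1) = Nat.choose (a + 1) k * (a + 1 - k) :=
    Nat.choose_mul_succ_eq a k
  have h2 : Nat.choose c k * (c + 1) = Nat.choose (c + 1) k * (c + 1 - k) :=
    Nat.choose_mul_succ_eq c k
  have harith : (a + 1) * (c + 1 - k) ≤ (a + 1 - k) * (c + 1) := by
    have h3 : k ≤ c + 1 := by omega
    have h4 : k ≤ a + 1 := by omega
    zify [h3, h4]
    have hca : (c : ℤ) ≤ a := by exact_mod_cast h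
    nlinarith
  calc Nat.choose (a + 1) k * Nat.choose c k * ((a + 1 - k) * (c + 1))
      = (Nat.choose (a + 1) k * (a + 1 - k)) * (Nat.choose c k * (c + 1)) := by ring
    _ = (Nat.choose a k * (a + 1)) * (Nat.choose (c + 1) k * (c + 1 - k)) := by rw [← h1, h2]
    _ = (Nat.choose a k * Nat.choose (c + 1) k) * ((a + 1) * (c + 1 - k)) := by ring
    _ ≤ (Nat.choose a k * Nat.choose (c + 1) k) * ((a + 1 - k) * (c + 1)) :=
        Nat.mul_le_mul_left _ harith

private lemma g_up11 (n l y : ℕ) (hl : l ≤ n) (h : 2 * (y + 1) ≤ l) :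
    Nat.choose (n - y) (n - l) * Nat.choose (n - l + y) (n - l) ≤
      Nat.choose (n - (y + 1)) (n - l) * Nat.choose (n - l + (y + 1)) (n - l) := by
  have e1 : n - y = (n - (y + 1)) + 1 := by omega
  have e2 : n - l + (y + 1) = (n - l + y) + 1 := by omega
  rw [e1, e2]
  exact step11 _ _ _ (by omega)

private lemma g_down11 (n l y : ℕ) (hl : l ≤ n) (h1 : l ≤ 2 * y + 1) (h2 : y + 1 ≤ l) :
    Nat.choose (n - (y + 1)) (n - l) * Nat.choose (n - l + (y + 1)) (n - l) ≤
      Nat.choose (n - y) (n - l) * Nat.choose (n - l + y) (n - l) := by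
  have e1 : n - l + (y + 1) = (n - l + y) + 1 := by omega
  have e2 : n - y = (n - (y + 1)) + 1 := by omega
  rw [e1, e2, mul_comm, mul_comm (Nat.choose ((n - (y+1)) + 1) (n - l))]
  exact step11 _ _ _ (by omega)

private lemma g_peak11 (n l : ℕ) (hl : l ≤ n) :
    ∀ y ≤ l, Nat.choose (n - y) (n - l) * Nat.choose (n - l + y) (n - l) ≤
      Nat.choose (n - l / 2) (n - l) * Nat.choose (n - l + l / 2) (n - l) := by
  intro y hy
  rcases le_or_gt y (l / 2) with hc | hc
  · -- ascend from y to l/2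
    obtain ⟨d, hd⟩ : ∃ d, y + d = l / 2 := ⟨l / 2 - y, by omega⟩
    clear hc hy
    induction d generalizing y with
    | zero => simp at hd; rw [hd]
    | succ d ih =>
      have h1 : 2 * (y + 1) ≤ l := by omega
      exact le_trans (g_up11 n l y hl h1) (ih (y + 1) (by omega))
  · -- descend from y to l/2
    obtain ⟨d, hd⟩ : ∃ d, l / 2 + d = y := ⟨y - l / 2, by omega⟩
    clear hc
    induction d generalizing y with
    | zero => simp at hd; rw [← hd]
    | succ d ih =>
      have hy' : l / 2 + d ≤ l := by omega
      have : y = (l / 2 + d) + 1 := by omega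
      subst this
      exact le_trans (g_down11 n l (l / 2 + d) hl (by omega) (by omega))
        (ih (l / 2 + d) hy' rfl)

theorem stmt11 (n l : ℕ) (hl : l ≤ n) :
    (Finset.range (l + 1)).sup
        (fun y => Nat.choose (n - y) (l - y) * Nat.choose (n + y - l) y) =
      Nat.choose (n - l / 2) ((l + 1) / 2) * Nat.choose (n - (l + 1) / 2) (l / 2) := by
  have hrw : ∀ y ≤ l, Nat.choose (n - y) (l - y) * Nat.choose (n + y - l) y =
      Nat.choose (n - y) (n - l) * Nat.choose (n - l + y) (n - l) := by
    intro y hy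
    have e1 : Nat.choose (n - y) (l - y) = Nat.choose (n - y) (n - l) := by
      have h1 : n - l ≤ n - y := by omega
      rw [← Nat.choose_symm h1]
      congr 1; omega
    have e2 : Nat.choose (n + y - l) y = Nat.choose (n - l + y) (n - l) := by
      have h1 : n - l ≤ n - l + y := by omega
      rw [← Nat.choose_symm h1]
      congr 1 <;> omega
    rw [e1, e2]
  have hRHS : Nat.choose (n - l / 2) ((l + 1) / 2) * Nat.choose (n - (l + 1) / 2) (l / 2) =
      Nat.choose (n - l / 2) (n - l) * Nat.choose (n - l + l / 2) (n - l) := by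
    have e1 : Nat.choose (n - l / 2) ((l + 1) / 2) = Nat.choose (n - l / 2) (n - l) := by
      have h1 : n - l ≤ n - l / 2 := by omega
      rw [← Nat.choose_symm h1]
      congr 1; omega
    have e2 : Nat.choose (n - (l + 1) / 2) (l / 2) = Nat.choose (n - l + l / 2) (n - l) := by
      have e : n - (l + 1) / 2 = n - l + l / 2 := by omega
      rw [e, ← Nat.choose_symm (show l / 2 ≤ n - l + l / 2 by omega)]
      congr 1; omega
    rw [e1, e2]
  rw [hRHS]
  apply le_antisymm
  · apply Finset.sup_le
    intro y hy
    rw [Finset.mem_range] at hy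
    rw [hrw y (by omega)]
    exact g_peak11 n l hl y (by omega)
  · have hmem : l / 2 ∈ Finset.range (l + 1) := Finset.mem_range.mpr (by omega)
    have h2 := hrw (l / 2) (by omega)
    exact le_trans (le_of_eq h2.symm)
      (Finset.le_sup (f := fun y => Nat.choose (n - y) (l - y) * Nat.choose (n + y - l) y) hmem)
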